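/- Let p be a prime, k a real abelian number field, and k_n the n-th layer of the cyclotomic Z_p-extension k_∞ of k. Assume there exists n_0 such that for all m ≥ n ≥ n_0: (i) the arithmetic norm map N_{k_m/k_n} : H_{k_m} → H_{k_n} is an isomorphism, and (ii) Gal(k_m/k_n) acts trivially on H_{k_m}. Then for every n ≥ 0 the p-class group H_{k_n} capitulates in k_∞; that is, there exists m ≥ n such that the extension-of-classes map J_{k_m/k_n} : H_{k_n} → H_{k_m} (induced by extension of ideals) is the trivial map. -/

import Mathlib

open NumberField IntermediateField
open scoped TensorProduct nonZeroDivisors Classical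

noncomputable section

/-- A primitive `n`-th root of unity in `ℂ`. -/
def zeta (n : ℕ) : ℂ := Complex.exp (2 * Real.pi * Complex.I / n)

/-- The cyclotomic field `ℚ(ζ_n)`, realized inside `ℂ`. -/
def cyclo (n : ℕ) : IntermediateField ℚ ℂ := ℚ⟮zeta n⟯

/-- The field of real numbers, as an intermediate field of `ℂ/ℚ`. -/
def realF : IntermediateField ℚ ℂ :=
  Subfield.toIntermediateField Complex.ofRealHom.fieldRange fun q => ⟨(q : ℝ), by norm_cast⟩

/-- The maximal real subfield `ℚ(ζ_n)⁺` of the cyclotomic field `ℚ(ζ_n)`. -/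
def cycloPlus (n : ℕ) : IntermediateField ℚ ℂ := cyclo n ⊓ realF

/-- `ℚ(μ_{p^∞})⁺ = ⋃ₙ ℚ(ζ_{pⁿ})⁺`, the maximal real subfield of the `p^∞`-cyclotomic tower. -/
def cycloInfPlus (p : ℕ) : IntermediateField ℚ ℂ := (⨆ m, cyclo (p ^ m)) ⊓ realF

/-- The `p`-class group of a number field `F`:
the `p`-primary component (Sylow `p`-subgroup) of the ideal class group. -/
def pCl (p : ℕ) [Fact p.Prime] (F : IntermediateField ℚ ℂ) : Subgroup (ClassGroup (𝓞 F)) :=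
  CommGroup.primaryComponent (ClassGroup (𝓞 F)) p

instance (K : IntermediateField ℚ ℂ) [FiniteDimensional ℚ K] : NumberField K := ⟨⟩

/-- Let `p` be a prime, `k` a real abelian number field, and `k_n` the `n`-th
layer of the cyclotomic `ℤ_p`-extension `k_∞` of `k` (so `k_n = k·ℚ_n` with `ℚ_n` the `n`-th
layer of the cyclotomic `ℤ_p`-extension of `ℚ`).  Assume there is `n₀` such that, for all
`m ≥ n ≥ n₀`, (i) the arithmetic norm `N_{k_m/k_n} : H_{k_m} → H_{k_n}` is an isomorphism
and (ii) `Gal(k_m/k_n)` acts trivially on `H_{k_m}`.  Then, for every `n ≥ 0`, the `p`-class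
group `H_{k_n}` capitulates in `k_∞`: there is `m ≥ n` such that the extension-of-classes
map `J_{k_m/k_n}` is trivial.  (The hypothesis `hJN` records the context fact that
`J ∘ N` is the algebraic norm `ν`, which raises `Gal(k_m/k_n)`-invariant classes to the
power `p^(m-n)`.) -/
theorem stmt_4 (p : ℕ) [Fact p.Prime]
    (k : IntermediateField ℚ ℂ) [FiniteDimensional ℚ k] [IsGalois ℚ k]
    (hreal : k ≤ realF)
    (habelian : ∀ σ τ : k ≃ₐ[ℚ] k, σ * τ = τ * σ)
    -- the layers `ℚ_n ⊆ ℚ(μ_{p^∞})⁺` of the cyclotomic `ℤ_p`-extension of `ℚ`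
    (Qn : ℕ → IntermediateField ℚ ℂ)
    (hQn : ∀ n, Qn n ≤ cycloInfPlus p ∧ Module.finrank ℚ (Qn n) = p ^ n)
    -- the layers `k_n = k·ℚ_n` of the cyclotomic `ℤ_p`-extension of `k`
    (kn : ℕ → IntermediateField ℚ ℂ) (hkn : ∀ n, kn n = k ⊔ Qn n)
    (hfd : ∀ n, FiniteDimensional ℚ (kn n))
    -- the arithmetic norm maps and the extension-of-classes maps on `p`-class groups
    (N : ∀ m n, n ≤ m → (pCl p (kn m) →* pCl p (kn n)))
    (J : ∀ n m, n ≤ m → (pCl p (kn n) →* pCl p (kn m)))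
    (hJtrans : ∀ n m m', ∀ h1 : n ≤ m, ∀ h2 : m ≤ m', ∀ x,
        J n m' (h1.trans h2) x = J m m' h2 (J n m h1 x))
    -- the natural Galois action on the class groups
    (act : ∀ n, (kn n ≃ₐ[ℚ] kn n) →* MulAut (ClassGroup (𝓞 (kn n))))
    -- `J ∘ N = ν` raises classes invariant under `Gal(k_m/k_n)` to the power `p^(m-n)`
    (hJN : ∀ m n, ∀ h : n ≤ m, ∀ x : pCl p (kn m),
        (∀ σ : kn m ≃ₐ[ℚ] kn m, (∀ y : kn m, (y : ℂ) ∈ kn n → σ y = y) →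
          act m σ (x : ClassGroup (𝓞 (kn m))) = x) →
        (J n m h (N m n h x) : ClassGroup (𝓞 (kn m)))
          = (x : ClassGroup (𝓞 (kn m))) ^ p ^ (m - n))
    (n0 : ℕ)
    -- (i) the arithmetic norms are isomorphisms for `m ≥ n ≥ n₀`
    (hNiso : ∀ m n, n0 ≤ n → ∀ h : n ≤ m, Function.Bijective (N m n h))
    -- (ii) `Gal(k_m/k_n)` acts trivially on `H_{k_m}` for `m ≥ n ≥ n₀`
    (htriv : ∀ m n, n0 ≤ n → n ≤ m → ∀ x : pCl p (kn m),
        ∀ σ : kn m ≃ₐ[ℚ] kn m, (∀ y : kn m, (y : ℂ) ∈ kn n → σ y = y) →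
        act m σ (x : ClassGroup (𝓞 (kn m))) = x) :
    ∀ n, ∃ m, ∃ h : n ≤ m, ∀ x : pCl p (kn n), J n m h x = 1 := by
  intro n
  have hp1 : 1 < p := (Fact.out : p.Prime).one_lt
  set n' := max n n0 with hn'
  have hn0 : n0 ≤ n' := le_max_right _ _
  have hnn' : n ≤ n' := le_max_left _ _
  haveI := hfd n'
  set e := Nat.card (pCl p (kn n')) with he
  set m := n' + e with hm
  have hn'm : n' ≤ m := Nat.le_add_right _ _
  haveI := hfd m
  have hme : m - n' = e := by omega
  refine ⟨m, hnn'.trans hn'm, ?_⟩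
  have key : ∀ z : pCl p (kn n'), J n' m hn'm z = 1 := by
    intro z
    obtain ⟨y, hy⟩ := (hNiso m n' hn0 hn'm).2 z
    have h1 := hJN m n' hn'm y (htriv m n' hn0 hn'm y)
    rw [hy, hme] at h1
    obtain ⟨j0, hj0⟩ := y.2
    obtain ⟨j, -, hj⟩ := (Nat.dvd_prime_pow (Fact.out : p.Prime)).1 (orderOf_dvd_of_pow_eq_one hj0)
    have hcard : Nat.card (pCl p (kn m)) = e := by
      rw [he]; exact Nat.card_eq_of_bijective _ (hNiso m n' hn0 hn'm)
    have hdvd : orderOf y ∣ e := hcard ▸ orderOf_dvd_natCard y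
    have hcoe : orderOf (y : ClassGroup (𝓞 (kn m))) = orderOf y :=
      orderOf_injective (pCl p (kn m)).subtype (Subgroup.subtype_injective _) y
    have hje : j ≤ e := by
      have hpos : 0 < e := Nat.card_pos
      have : p ^ j ∣ e := by rw [← hj, hcoe]; exact hdvd
      have hle : p ^ j ≤ e := Nat.le_of_dvd hpos this
      have : j < p ^ j := Nat.lt_pow_self hp1
      omega
    have hone : (y : ClassGroup (𝓞 (kn m))) ^ p ^ e = 1 := by
      apply orderOf_dvd_iff_pow_eq_one.mp
      rw [hj]
      exact pow_dvd_pow p hje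
    have : (J n' m hn'm z : ClassGroup (𝓞 (kn m))) = 1 := h1.trans hone
    exact (OneMemClass.coe_eq_one).mp this
  intro x
  rw [hJtrans n n' m hnn' hn'm x, key]
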